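/- Change-of-measure inequality: Let π be a probability measure on a measurable space A, let g: A → ℝ be measurable, and let λ > 0. Then for every probability measure ρ on A with KL(ρ‖π) < ∞ and such that g is ρ-integrable and e^{λg} is π-integrable: E_{f∼ρ} g(f) ≤ (1/λ)(KL(ρ‖π) + log E_{f∼π} e^{λ g(f)}). -/

import Mathlib

open MeasureTheory

/-- Kullback-Leibler divergence (real-valued): `∫ log (dρ/dπ) dρ`. -/
noncomputable def klDiv {A : Type*} [MeasurableSpace A] (ρ π : Measure A) : ℝ :=
  ∫ a, Real.log (ρ.rnDeriv π a).toReal ∂ρ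

lemma integral_llr_nonneg' {A : Type*} [MeasurableSpace A] (μ ν : Measure A)
    [IsProbabilityMeasure μ] [IsProbabilityMeasure ν] (hμν : μ ≪ ν)
    (hint : Integrable (llr μ ν) μ) : 0 ≤ ∫ x, llr μ ν x ∂μ := by
  set h : A → ℝ := fun x => ((μ.rnDeriv ν x).toReal)⁻¹ with hh
  have hmeas : Measurable h := (Measure.measurable_rnDeriv μ ν).ennreal_toReal.inv
  have hpos : ∀ᵐ x ∂μ, 0 < (μ.rnDeriv ν x).toReal := by
    filter_upwards [Measure.rnDeriv_pos hμν, hμν.ae_le (Measure.rnDeriv_lt_top μ ν)]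
      with x h1 h2
    exact ENNReal.toReal_pos h1.ne' h2.ne
  have hlint : ∫⁻ x, ENNReal.ofReal (h x) ∂μ ≤ 1 := by
    conv_lhs => rw [← Measure.withDensity_rnDeriv_eq μ ν hμν]
    rw [lintegral_withDensity_eq_lintegral_mul ν (Measure.measurable_rnDeriv μ ν)
      (hmeas.ennreal_ofReal)]
    calc ∫⁻ x, (μ.rnDeriv ν * fun x => ENNReal.ofReal (h x)) x ∂ν
        ≤ ∫⁻ _, 1 ∂ν := by
          refine lintegral_mono_ae ?_
          filter_upwards [Measure.rnDeriv_lt_top μ ν] with x hx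
          simp only [Pi.mul_apply]
          rcases eq_or_ne (μ.rnDeriv ν x) 0 with h0 | h0
          · simp [h0]
          · have ht : 0 < (μ.rnDeriv ν x).toReal := ENNReal.toReal_pos h0 hx.ne
            rw [hh]
            rw [← ENNReal.ofReal_toReal hx.ne, ← ENNReal.ofReal_mul ENNReal.toReal_nonneg,
              mul_inv_cancel₀ ht.ne', ENNReal.ofReal_one]
      _ = 1 := by simp
  have hnonneg : 0 ≤ᵐ[μ] h := Filter.Eventually.of_forall fun x => by positivity
  have hintg : Integrable h μ := by
    refine ⟨hmeas.aestronglyMeasurable, ?_⟩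
    rw [hasFiniteIntegral_iff_ofReal hnonneg]
    exact lt_of_le_of_lt hlint ENNReal.one_lt_top
  have hival : ∫ x, h x ∂μ ≤ 1 := by
    rw [integral_eq_lintegral_of_nonneg_ae hnonneg hmeas.aestronglyMeasurable]
    have := ENNReal.toReal_mono (show (1 : ENNReal) ≠ ⊤ by simp) hlint
    simpa using this
  have key : ∫ x, -llr μ ν x ∂μ ≤ ∫ x, (h x - 1) ∂μ := by
    refine integral_mono_ae hint.neg (hintg.sub (integrable_const 1)) ?_
    filter_upwards [hpos] with x hx
    have : -llr μ ν x = Real.log (h x) := by rw [hh]; simp [llr, Real.log_inv]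
    rw [this]
    exact Real.log_le_sub_one_of_pos (by positivity)
  rw [integral_sub hintg (integrable_const 1)] at key
  simp only [integral_const, measure_univ, ENNReal.toReal_one, probReal_univ, smul_eq_mul, one_mul,
    integral_neg] at key
  linarith

/-- Change-of-measure inequality:
`E_{f∼ρ} g(f) ≤ (1/λ)(KL(ρ‖π) + log E_{f∼π} e^{λ g(f)})`. -/
theorem change_of_measure {A : Type*} [MeasurableSpace A]
    (π ρ : Measure A) [IsProbabilityMeasure π] [IsProbabilityMeasure ρ]
    (g : A → ℝ) (hg : Measurable g) (lam : ℝ) (hlam : 0 < lam)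
    (hac : ρ ≪ π)
    (hKL : Integrable (fun a => Real.log (ρ.rnDeriv π a).toReal) ρ)
    (hgint : Integrable g ρ)
    (hexp : Integrable (fun a => Real.exp (lam * g a)) π) :
    ∫ a, g a ∂ρ ≤ (1 / lam) * (klDiv ρ π + Real.log (∫ a, Real.exp (lam * g a) ∂π)) := by
  
  have hKL' : Integrable (llr ρ π) ρ := hKL
  have hf : Integrable (fun a => lam * g a) ρ := hgint.const_mul lam
  have hν : IsProbabilityMeasure (π.tilted fun a => lam * g a) :=
    isProbabilityMeasure_tilted hexp
  have hacν : ρ ≪ π.tilted fun a => lam * g a :=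
    hac.trans (absolutelyContinuous_tilted hexp)
  have hint : Integrable (llr ρ (π.tilted fun a => lam * g a)) ρ :=
    integrable_llr_tilted_right hac hf hKL' hexp
  have h0 := integral_llr_nonneg' ρ (π.tilted fun a => lam * g a) hacν hint
  rw [integral_llr_tilted_right hac hf hexp hKL'] at h0
  have hmul : ∫ a, lam * g a ∂ρ = lam * ∫ a, g a ∂ρ := integral_const_mul lam g
  have hkl : klDiv ρ π = ∫ x, llr ρ π x ∂ρ := rfl
  rw [hmul] at h0
  rw [hkl, one_div, inv_mul_eq_div]
  exact (le_div_iff₀ hlam).mpr (by linarith)
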